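/- Consistency is non-local: for the closure C* of a unit conversion C, the following are equivalent: (a) there exist units u, v and ratios r₁ ≠ r₂ with u →r₁ v and u →r₂ v in C*; (b) for every pair of units u', v' with u' →t v' in C* for some t, there exist t₁ ≠ t₂ with u' →t₁ v' and u' →t₂ v' in C*; (c) there exists a ratio s ≠ 1 with 0 →s 0 in C*. -/

import Mathlib

open Finsupp

/-- The positive rationals, as a multiplicative group. -/
abbrev Ratio : Type := {q : ℚ // 0 < q}

/-- Prefixes: the free abelian group over base prefixes `P`. -/
abbrev PrefG (P : Type*) : Type _ := P →₀ ℤ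
/-- Root units: the free abelian group over base units `B`. -/
abbrev RootG (B : Type*) : Type _ := B →₀ ℤ
/-- Units: the free abelian group over preunits (prefix, base unit). -/
abbrev UnitG (P B : Type*) : Type _ := ((P →₀ ℤ) × B) →₀ ℤ

variable {P B D : Type*}

/-- The root of a unit: forget all prefixes. -/
noncomputable def rootU (u : UnitG P B) : RootG B :=
  Finsupp.mapDomain Prod.snd u

/-- Embed a root unit back into the units, with empty prefixes. -/
noncomputable def unrootU (f : RootG B) : UnitG P B :=
  Finsupp.mapDomain (fun b => ((0 : PrefG P), b)) f

/-- Strip all prefixes from a unit. -/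
noncomputable def stripU (u : UnitG P B) : UnitG P B := unrootU (rootU u)

/-- The value of a prefix, given values of base prefixes. -/
noncomputable def valP (val₀ : P → Ratio) (f : PrefG P) : Ratio :=
  ∏ p ∈ f.support, val₀ p ^ (f p)

/-- The prefix value of a unit. -/
noncomputable def pvalU (val₀ : P → Ratio) (g : UnitG P B) : Ratio :=
  ∏ x ∈ g.support, valP val₀ x.1 ^ (g x)

/-- The dimension of a root unit, given dimensions of base units. -/
noncomputable def dimRoot (dim₀ : B → D →₀ ℤ) (f : RootG B) : D →₀ ℤ :=
  ∑ b ∈ f.support, f b • dim₀ b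

/-- The dimension of a unit. -/
noncomputable def dimU (dim₀ : B → D →₀ ℤ) (u : UnitG P B) : D →₀ ℤ :=
  dimRoot dim₀ (rootU u)

/-- The combined prefix of a unit. -/
noncomputable def prefU (u : UnitG P B) : PrefG P :=
  ∑ x ∈ u.support, u x • x.1

/-- Normalization of a unit. -/
noncomputable def normU (u : UnitG P B) : PrefG P × RootG B :=
  (prefU u, rootU u)

/-- Evaluation of a unit. -/
noncomputable def evalU (val₀ : P → Ratio) (u : UnitG P B) : Ratio × RootG B :=
  (pvalU val₀ u, rootU u)

/-- A unit conversion: dimensionally consistent and functional in the ratio. -/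
def IsConversion (dim₀ : B → D →₀ ℤ) (C : Set (UnitG P B × Ratio × UnitG P B)) : Prop :=
  (∀ u r v, (u, r, v) ∈ C → dimU dim₀ u = dimU dim₀ v) ∧
  (∀ u r r' v, (u, r, v) ∈ C → (u, r', v) ∈ C → r = r')

/-- The closure rules for unit conversions. -/
inductive ClosureRel {P B : Type*} (val₀ : P → Ratio)
    (C : Set (UnitG P B × Ratio × UnitG P B)) :
    UnitG P B → Ratio → UnitG P B → Prop
  | base {u r v} : (u, r, v) ∈ C → ClosureRel val₀ C u r v
  | mul {u r v u' r' v'} : ClosureRel val₀ C u r v → ClosureRel val₀ C u' r' v' →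
      ClosureRel val₀ C (u + u') (r * r') (v + v')
  | inv {u r v} : ClosureRel val₀ C u r v → ClosureRel val₀ C (-u) r⁻¹ (-v)
  | pe (u : UnitG P B) : ClosureRel val₀ C u (pvalU val₀ u) (stripU u)
  | pe' (u : UnitG P B) : ClosureRel val₀ C (stripU u) (pvalU val₀ u)⁻¹ u

/-- The conversion closure: the smallest relation containing `C` closed under the rules. -/
def convClosure (val₀ : P → Ratio) (C : Set (UnitG P B × Ratio × UnitG P B)) :
    Set (UnitG P B × Ratio × UnitG P B) :=
  {t | ClosureRel val₀ C t.1 t.2.1 t.2.2}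

/-- Convertibility with respect to a conversion. -/
def Convertible (C : Set (UnitG P B × Ratio × UnitG P B)) (u v : UnitG P B) : Prop :=
  ∃ r, (u, r, v) ∈ C

/-- Coherence with respect to a conversion. -/
def Coherent (C : Set (UnitG P B × Ratio × UnitG P B)) (u v : UnitG P B) : Prop :=
  (u, (1 : Ratio), v) ∈ C

/-- The unit `δu₀` corresponding to a base unit. -/
noncomputable def deltaB (P : Type*) {B : Type*} (u₀ : B) : UnitG P B :=
  Finsupp.single ((0 : PrefG P), u₀) 1

/-- A defining conversion: basic and functional in its first component. -/
def IsDefining (C : Set (UnitG P B × Ratio × UnitG P B)) : Prop :=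
  (∀ u r v, (u, r, v) ∈ C → ∃ u₀ : B, u = deltaB P u₀) ∧
  (∀ u r v r' v', (u, r, v) ∈ C → (u, r', v') ∈ C → v = v')

/-- One-step dependency between base units. -/
def Depends (C : Set (UnitG P B × Ratio × UnitG P B)) (u₀ v₀ : B) : Prop :=
  ∃ r v, (deltaB P u₀, r, v) ∈ C ∧ v₀ ∈ (rootU v).support

/-- The dependency order `>_C`. -/
def DepOrd (C : Set (UnitG P B × Ratio × UnitG P B)) : B → B → Prop :=
  Relation.TransGen (Depends C)

/-- The domain of a defining conversion. -/
def domC (C : Set (UnitG P B × Ratio × UnitG P B)) : Set B :=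
  {u₀ : B | ∃ r v, (deltaB P u₀, r, v) ∈ C}


/-- Definition expansion. -/
noncomputable def xpd (C : Set (UnitG P B × Ratio × UnitG P B)) (u₀ : B) :
    Ratio × UnitG P B :=
  haveI := Classical.propDecidable (∃ rv : Ratio × UnitG P B, (deltaB P u₀, rv.1, rv.2) ∈ C)
  if h : ∃ rv : Ratio × UnitG P B, (deltaB P u₀, rv.1, rv.2) ∈ C then h.choose
  else (1, deltaB P u₀)

/-- The base rewriting map. -/
noncomputable def rwrB (val₀ : P → Ratio) (C : Set (UnitG P B × Ratio × UnitG P B))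
    (u₀ : B) : Ratio × RootG B :=
  ((xpd C u₀).1 * pvalU val₀ (xpd C u₀).2, rootU (xpd C u₀).2)

/-- One rewriting step on evaluated units. -/
noncomputable def rwrStep (val₀ : P → Ratio) (C : Set (UnitG P B × Ratio × UnitG P B)) :
    Ratio × RootG B → Ratio × RootG B :=
  fun p => (p.1 * ∏ b ∈ p.2.support, (rwrB val₀ C b).1 ^ (p.2 b),
            ∑ b ∈ p.2.support, p.2 b • (rwrB val₀ C b).2)


lemma zero_self_mem {P B : Type*} (val₀ : P → Ratio)
    (C : Set (UnitG P B × Ratio × UnitG P B)) :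
    ((0 : UnitG P B), (1 : Ratio), (0 : UnitG P B)) ∈ convClosure val₀ C := by
  have h := ClosureRel.pe (val₀ := val₀) (C := C) (0 : UnitG P B)
  have h1 : pvalU val₀ (0 : UnitG P B) = 1 := by
    simp [pvalU, Finsupp.support_zero]
  have h2 : stripU (0 : UnitG P B) = 0 := by
    simp [stripU, rootU, unrootU, Finsupp.mapDomain_zero]
  rw [h1, h2] at h
  exact h

/-- Consistency is non-local: contradictory factors for some pair, contradictory
factors for every convertible pair, and a nontrivial factor on the empty unit are
all equivalent in the closure of a unit conversion. -/
theorem consistency_nonlocal {P B D : Type*} (val₀ : P → Ratio) (dim₀ : B → D →₀ ℤ)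
    (C : Set (UnitG P B × Ratio × UnitG P B)) (hC : IsConversion dim₀ C) :
    ((∃ (u v : UnitG P B) (r₁ r₂ : Ratio), r₁ ≠ r₂ ∧
        (u, r₁, v) ∈ convClosure val₀ C ∧ (u, r₂, v) ∈ convClosure val₀ C) ↔
      (∀ u' v' : UnitG P B, (∃ t : Ratio, (u', t, v') ∈ convClosure val₀ C) →
        ∃ t₁ t₂ : Ratio, t₁ ≠ t₂ ∧
          (u', t₁, v') ∈ convClosure val₀ C ∧ (u', t₂, v') ∈ convClosure val₀ C)) ∧
    ((∃ s : Ratio, s ≠ 1 ∧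
        ((0 : UnitG P B), s, (0 : UnitG P B)) ∈ convClosure val₀ C) ↔
      (∃ (u v : UnitG P B) (r₁ r₂ : Ratio), r₁ ≠ r₂ ∧
        (u, r₁, v) ∈ convClosure val₀ C ∧ (u, r₂, v) ∈ convClosure val₀ C)) := by

  have key : (∃ (u v : UnitG P B) (r₁ r₂ : Ratio), r₁ ≠ r₂ ∧
        (u, r₁, v) ∈ convClosure val₀ C ∧ (u, r₂, v) ∈ convClosure val₀ C) →
      (∃ s : Ratio, s ≠ 1 ∧
        ((0 : UnitG P B), s, (0 : UnitG P B)) ∈ convClosure val₀ C) := by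
    rintro ⟨u, v, r₁, r₂, hne, h1, h2⟩
    refine ⟨r₁ * r₂⁻¹, ?_, ?_⟩
    · intro h
      exact hne (by rwa [mul_inv_eq_one] at h)
    · have := ClosureRel.mul h1 (ClosureRel.inv h2)
      simpa [convClosure] using this
  have cimp : (∃ s : Ratio, s ≠ 1 ∧
        ((0 : UnitG P B), s, (0 : UnitG P B)) ∈ convClosure val₀ C) →
      (∀ u' v' : UnitG P B, (∃ t : Ratio, (u', t, v') ∈ convClosure val₀ C) →
        ∃ t₁ t₂ : Ratio, t₁ ≠ t₂ ∧
          (u', t₁, v') ∈ convClosure val₀ C ∧ (u', t₂, v') ∈ convClosure val₀ C) := by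
    rintro ⟨s, hs, hs0⟩ u' v' ⟨t, ht⟩
    refine ⟨t, t * s, ?_, ht, ?_⟩
    · intro h
      exact hs (mul_left_cancel (a := t) (by rw [mul_one]; exact h.symm))
    · have := ClosureRel.mul ht hs0
      simpa [convClosure] using this
  constructor
  · constructor
    · intro hA
      exact cimp (key hA)
    · intro hB
      obtain ⟨t₁, t₂, hne, h1, h2⟩ := hB 0 0 ⟨1, zero_self_mem val₀ C⟩
      exact ⟨0, 0, t₁, t₂, hne, h1, h2⟩
  · constructor
    · rintro ⟨s, hs, hs0⟩
      exact ⟨0, 0, s, 1, hs, hs0, zero_self_mem val₀ C⟩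
    · exact key
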